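/- arXiv:1807.04643 — 4 statements merged into one kernel-verified Lean document; each statement's English description precedes it below -/
import Mathlib

section
/- Let A ∈ ℝ^{m×n}, let K ≥ 1 be an integer, and suppose δ ∈ [0,1) satisfies the RIP of order K+1 for A. Let Ω ⊆ {1,…,n} with |Ω| ≤ K, Ω ≠ ∅ and Ω^c ≠ ∅, let S ⊆ Ω with |S| < |Ω|, and let v ∈ ℝ^m satisfy ‖v‖₂ ≤ ε. Then ‖A_{Ω∖S}ᵀ P_S^⊥ v‖_∞ + ‖A_{Ω^c}ᵀ P_S^⊥ v‖_∞ ≤ √(2(1+δ)) · ε. -/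
open Matrix Finset

/-- The Euclidean (`ℓ₂`) norm of a real vector. -/
noncomputable def l2norm {ι : Type*} [Fintype ι] (v : ι → ℝ) : ℝ :=
  Real.sqrt (∑ i, v i ^ 2)

/-- The support `{i : x i ≠ 0}` of a vector, as a `Finset`. -/
noncomputable def sparseSupport {n : ℕ} (x : Fin n → ℝ) : Finset (Fin n) :=
  Finset.univ.filter (fun i => x i ≠ 0)

/-- `δ` satisfies the restricted isometry property of order `k` for `A`:
`(1-δ)‖x‖₂² ≤ ‖Ax‖₂² ≤ (1+δ)‖x‖₂²` for all `x` with at most `k` nonzero entries. -/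
def RIP {m n : ℕ} (A : Matrix (Fin m) (Fin n) ℝ) (k : ℕ) (δ : ℝ) : Prop :=
  ∀ x : Fin n → ℝ, (sparseSupport x).card ≤ k →
    (1 - δ) * (∑ i, x i ^ 2) ≤ (∑ i, (A.mulVec x) i ^ 2) ∧
    (∑ i, (A.mulVec x) i ^ 2) ≤ (1 + δ) * (∑ i, x i ^ 2)

/-- The submatrix `A_S` of `A` containing only the columns indexed by `S`. -/
def colSub {m n : ℕ} (A : Matrix (Fin m) (Fin n) ℝ) (S : Finset (Fin n)) :
    Matrix (Fin m) {j // j ∈ S} ℝ :=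
  fun i j => A i j.1

/-- The orthogonal complement projector `P_S^⊥ = I - A_S (A_Sᵀ A_S)⁻¹ A_Sᵀ`
(equal to `I` when `S = ∅`). -/
noncomputable def projPerp {m n : ℕ} (A : Matrix (Fin m) (Fin n) ℝ) (S : Finset (Fin n)) :
    Matrix (Fin m) (Fin m) ℝ :=
  1 - colSub A S * ((colSub A S)ᵀ * colSub A S)⁻¹ * (colSub A S)ᵀ

/-- The subvector `x_T`, extended by zero outside `T` (so that `A_T x_T = A (restrictVec x T)`). -/
def restrictVec {n : ℕ} (x : Fin n → ℝ) (T : Finset (Fin n)) : Fin n → ℝ :=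
  fun i => if i ∈ T then x i else 0

/-- `‖(w i)_{i ∈ T}‖_∞ = max_{i ∈ T} |w i|` (equal to `0` when `T = ∅`). -/
noncomputable def supAbs {n : ℕ} (T : Finset (Fin n)) (w : Fin n → ℝ) : ℝ :=
  sSup ((fun i => |w i|) '' ↑T)

/- ---------- auxiliary lemmas ---------- -/

lemma aux_sign_mul_self (r : ℝ) : Real.sign r * r = |r| := by
  rcases lt_trichotomy r 0 with h | h | h
  · rw [Real.sign_of_neg h, abs_of_neg h]; ring
  · simp [h]
  · rw [Real.sign_of_pos h, abs_of_pos h]; ring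

lemma aux_sign_sq_le (r : ℝ) : Real.sign r ^ 2 ≤ 1 := by
  rcases lt_trichotomy r 0 with h | h | h
  · rw [Real.sign_of_neg h]; norm_num
  · simp [h]
  · rw [Real.sign_of_pos h]; norm_num

lemma aux_colSub_mulVec {m n : ℕ} (A : Matrix (Fin m) (Fin n) ℝ) (S : Finset (Fin n))
    (y : {j // j ∈ S} → ℝ) :
    (colSub A S).mulVec y = A.mulVec (fun i => if h : i ∈ S then y ⟨i, h⟩ else 0) := by
  funext i
  simp only [Matrix.mulVec, dotProduct, colSub]
  rw [show (∑ j : Fin n, A i j * (if h : j ∈ S then y ⟨j, h⟩ else 0))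
      = ∑ j ∈ S, A i j * (if h : j ∈ S then y ⟨j, h⟩ else 0) from
    (Finset.sum_subset (Finset.subset_univ S) (fun t _ ht => by simp [ht])).symm]
  rw [← Finset.sum_coe_sort S (fun j => A i j * (if h : j ∈ S then y ⟨j, h⟩ else 0))]
  refine Finset.sum_congr rfl (fun j _ => ?_)
  rw [dif_pos j.2]

lemma aux_sum_sq_ext {n : ℕ} (S : Finset (Fin n)) (y : {j // j ∈ S} → ℝ) :
    ∑ i, (if h : i ∈ S then y ⟨i, h⟩ else 0) ^ 2 = ∑ j, (y j) ^ 2 := by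
  rw [show (∑ i : Fin n, (if h : i ∈ S then y ⟨i, h⟩ else 0) ^ 2)
      = ∑ i ∈ S, (if h : i ∈ S then y ⟨i, h⟩ else 0) ^ 2 from
    (Finset.sum_subset (Finset.subset_univ S) (fun t _ ht => by simp [ht])).symm]
  rw [← Finset.sum_coe_sort S (fun i => (if h : i ∈ S then y ⟨i, h⟩ else 0) ^ 2)]
  refine Finset.sum_congr rfl (fun j _ => ?_)
  rw [dif_pos j.2]

lemma aux_projPerp_l2 {m n : ℕ} (A : Matrix (Fin m) (Fin n) ℝ) (S : Finset (Fin n))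
    (hinj : ∀ y : {j // j ∈ S} → ℝ, (colSub A S).mulVec y = 0 → y = 0)
    (v : Fin m → ℝ) : ∑ i, ((projPerp A S).mulVec v) i ^ 2 ≤ ∑ i, v i ^ 2 := by
  classical
  set B := colSub A S with hB
  set G := Bᵀ * B with hG
  have hsq : ∀ z : Fin m → ℝ, ∑ i, z i ^ 2 = z ⬝ᵥ z := by
    intro z; simp [dotProduct, pow_two]
  have hGpd : G.PosDef := by
    rw [Matrix.posDef_iff_dotProduct_mulVec]
    constructor
    · show Gᴴ = G
      ext i j
      simp [hG, Matrix.conjTranspose_apply, Matrix.mul_apply, Matrix.transpose_apply, mul_comm]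
    · intro x hx
      have hstar : star x = x := by simp
      have h1 : star x ⬝ᵥ (G *ᵥ x) = (B *ᵥ x) ⬝ᵥ (B *ᵥ x) := by
        rw [hstar, hG, ← Matrix.mulVec_mulVec, Matrix.dotProduct_mulVec,
          Matrix.vecMul_transpose]
      rw [h1]
      have hBx : B *ᵥ x ≠ 0 := fun h => hx (hinj x h)
      obtain ⟨i, hi⟩ := Function.ne_iff.mp hBx
      rw [← hsq]
      refine Finset.sum_pos' (fun t _ => sq_nonneg _) ⟨i, Finset.mem_univ i, ?_⟩
      exact lt_of_le_of_ne (sq_nonneg _) (Ne.symm (pow_ne_zero 2 hi))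
  have hGdet : IsUnit G.det := hGpd.det_pos.ne'.isUnit
  set P := B * G⁻¹ * Bᵀ with hP
  have h0 : Bᵀ * (B * (G⁻¹ * Bᵀ)) = Bᵀ := by
    rw [← Matrix.mul_assoc, ← Matrix.mul_assoc, ← hG, Matrix.mul_nonsing_inv G hGdet,
      Matrix.one_mul]
  have hPP : P * P = P := by
    rw [hP]
    calc (B * G⁻¹ * Bᵀ) * (B * G⁻¹ * Bᵀ)
        = B * (G⁻¹ * (Bᵀ * (B * (G⁻¹ * Bᵀ)))) := by simp only [Matrix.mul_assoc]
      _ = B * (G⁻¹ * Bᵀ) := by rw [h0]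
      _ = B * G⁻¹ * Bᵀ := by rw [Matrix.mul_assoc]
  have hGT : Gᵀ = G := by rw [hG, Matrix.transpose_mul, Matrix.transpose_transpose]
  have hPsym : Pᵀ = P := by
    rw [hP, Matrix.transpose_mul, Matrix.transpose_mul, Matrix.transpose_transpose,
      Matrix.transpose_nonsing_inv, hGT, Matrix.mul_assoc]
  set p := P *ᵥ v with hp
  have hw : (projPerp A S) *ᵥ v = v - p := by
    show (1 - B * (Bᵀ * B)⁻¹ * Bᵀ) *ᵥ v = v - p
    rw [Matrix.sub_mulVec, Matrix.one_mulVec, ← hG, ← hP, ← hp]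
  have hppv : p ⬝ᵥ p = p ⬝ᵥ v := by
    calc p ⬝ᵥ p = p ⬝ᵥ (P *ᵥ v) := by rw [← hp]
      _ = (p ᵥ* P) ⬝ᵥ v := Matrix.dotProduct_mulVec _ _ _
      _ = (Pᵀ *ᵥ p) ⬝ᵥ v := by rw [Matrix.mulVec_transpose]
      _ = ((Pᵀ * P) *ᵥ v) ⬝ᵥ v := by rw [hp, Matrix.mulVec_mulVec]
      _ = p ⬝ᵥ v := by rw [hPsym, hPP, ← hp]
  have hpnn : 0 ≤ p ⬝ᵥ p := by rw [← hsq]; exact Finset.sum_nonneg (fun _ _ => sq_nonneg _)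
  have hcomm : v ⬝ᵥ p = p ⬝ᵥ v := dotProduct_comm _ _
  rw [hw, hsq, hsq]
  rw [sub_dotProduct, dotProduct_sub, dotProduct_sub]
  linarith [hppv, hpnn, hcomm]

lemma aux_supAbs_exists {n : ℕ} (T : Finset (Fin n)) (hT : T.Nonempty) (w : Fin n → ℝ) :
    ∃ i ∈ T, supAbs T w = |w i| := by
  have hfin : ((fun i => |w i|) '' (↑T : Set (Fin n))).Finite := T.finite_toSet.image _
  have hne : ((fun i => |w i|) '' (↑T : Set (Fin n))).Nonempty :=
    (Finset.coe_nonempty.mpr hT).image _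
  obtain ⟨i, hiT, hi⟩ := hne.csSup_mem hfin
  exact ⟨i, hiT, hi.symm⟩

/-- Noise bound: `‖A_{Ω∖S}ᵀ P_S^⊥ v‖_∞ + ‖A_{Ω^c}ᵀ P_S^⊥ v‖_∞ ≤ √(2(1+δ)) ε`. -/
theorem omp_noise_bound {m n : ℕ} (A : Matrix (Fin m) (Fin n) ℝ) (K : ℕ) (hK : 1 ≤ K)
    (δ : ℝ) (hδ0 : 0 ≤ δ) (hδ1 : δ < 1) (hRIP : RIP A (K + 1) δ)
    (Ω : Finset (Fin n)) (hΩ : Ω.card ≤ K) (hΩne : Ω.Nonempty) (hΩcne : Ωᶜ.Nonempty)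
    (S : Finset (Fin n)) (hS : S ⊆ Ω) (hcard : S.card < Ω.card)
    (v : Fin m → ℝ) (ε : ℝ) (hv : l2norm v ≤ ε) :
    supAbs (Ω \ S) (Aᵀ.mulVec ((projPerp A S).mulVec v))
      + supAbs Ωᶜ (Aᵀ.mulVec ((projPerp A S).mulVec v))
      ≤ Real.sqrt (2 * (1 + δ)) * ε := by
  classical
  have hεnn : 0 ≤ ε := le_trans (Real.sqrt_nonneg _) hv
  -- injectivity of colSub A S from RIP
  have hinj : ∀ y : {j // j ∈ S} → ℝ, (colSub A S).mulVec y = 0 → y = 0 := by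
    intro y hy
    have hext := aux_colSub_mulVec A S y
    have hsupp : (sparseSupport (fun i => if h : i ∈ S then y ⟨i, h⟩ else 0)).card ≤ K + 1 := by
      have hsub : sparseSupport (fun i => if h : i ∈ S then y ⟨i, h⟩ else 0) ⊆ S := by
        intro t ht
        simp only [sparseSupport, Finset.mem_filter] at ht
        by_contra h
        rw [dif_neg h] at ht
        exact ht.2 rfl
      have := Finset.card_le_card hsub
      omega
    have h := (hRIP _ hsupp).1
    rw [← hext, hy] at h
    simp only [Pi.zero_apply] at h
    have hz : ∑ i, (if h : i ∈ S then y ⟨i, h⟩ else 0) ^ 2 = 0 := by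
      have hnn : 0 ≤ ∑ i, (if h : i ∈ S then y ⟨i, h⟩ else 0) ^ 2 :=
        Finset.sum_nonneg (fun _ _ => sq_nonneg _)
      have h0 : (∑ _x : Fin m, (0:ℝ) ^ 2) = 0 := by simp
      nlinarith [h, h0]
    rw [aux_sum_sq_ext] at hz
    funext j
    have := (Finset.sum_eq_zero_iff_of_nonneg (fun t _ => sq_nonneg (y t))).mp hz j
      (Finset.mem_univ j)
    exact pow_eq_zero_iff (n := 2) (by norm_num) |>.mp (this)
  set w := (projPerp A S) *ᵥ v with hwdef
  set u := Aᵀ *ᵥ w with hudef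
  -- projection bound
  have hwv : ∑ i, w i ^ 2 ≤ ∑ i, v i ^ 2 := aux_projPerp_l2 A S hinj v
  -- extract maximizers
  have hΩSne : (Ω \ S).Nonempty := by
    rw [← Finset.card_pos, Finset.card_sdiff_of_subset hS]; omega
  obtain ⟨i, hiT, hie⟩ := aux_supAbs_exists (Ω \ S) hΩSne u
  obtain ⟨j, hjT, hje⟩ := aux_supAbs_exists Ωᶜ hΩcne u
  have hiΩ : i ∈ Ω := (Finset.mem_sdiff.mp hiT).1
  have hjΩ : j ∉ Ω := Finset.mem_compl.mp hjT
  have hij : i ≠ j := fun h => hjΩ (h ▸ hiΩ)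
  -- the two-spike vector
  set x : Fin n → ℝ :=
    fun t => if t = i then Real.sign (u i) else if t = j then Real.sign (u j) else 0 with hxdef
  have hxi : x i = Real.sign (u i) := by simp [hxdef]
  have hxj : x j = Real.sign (u j) := by simp [hxdef, (Ne.symm hij)]
  have key : ∀ g : Fin n → ℝ, (∀ t, t ≠ i → t ≠ j → g t = 0) → ∑ t, g t = g i + g j := by
    intro g hg
    rw [← Finset.sum_subset (Finset.subset_univ ({i, j} : Finset (Fin n)))
      (fun t _ ht => by
        simp only [Finset.mem_insert, Finset.mem_singleton] at ht
        push_neg at ht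
        exact hg t ht.1 ht.2)]
    exact Finset.sum_pair hij
  have hx2 : ∑ t, x t ^ 2 = Real.sign (u i) ^ 2 + Real.sign (u j) ^ 2 := by
    rw [key (fun t => x t ^ 2) (fun t h1 h2 => by simp [hxdef, h1, h2]), hxi, hxj]
  have hx2le : ∑ t, x t ^ 2 ≤ 2 := by
    rw [hx2]; linarith [aux_sign_sq_le (u i), aux_sign_sq_le (u j)]
  have hxsupp : (sparseSupport x).card ≤ K + 1 := by
    have hsub : sparseSupport x ⊆ {i, j} := by
      intro t ht
      simp only [sparseSupport, Finset.mem_filter] at ht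
      rw [Finset.mem_insert, Finset.mem_singleton]
      by_contra h
      push_neg at h
      exact ht.2 (by simp [hxdef, h.1, h.2])
    have h1 := Finset.card_le_card hsub
    have h2 : ({i, j} : Finset (Fin n)).card ≤ 2 := Finset.card_insert_le _ _ |>.trans (by simp)
    omega
  have hxu : ∑ t, x t * u t = |u i| + |u j| := by
    rw [key (fun t => x t * u t) (fun t h1 h2 => by simp [hxdef, h1, h2]), hxi, hxj,
      aux_sign_mul_self, aux_sign_mul_self]
  -- Cauchy-Schwarz
  have hAx : ∑ t, (A *ᵥ x) t ^ 2 ≤ 2 * (1 + δ) := by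
    have := (hRIP x hxsupp).2
    nlinarith [hx2le, this]
  have hdot : ∑ t, x t * u t = ∑ t, (A *ᵥ x) t * w t := by
    have : x ⬝ᵥ (Aᵀ *ᵥ w) = (A *ᵥ x) ⬝ᵥ w := by
      rw [Matrix.dotProduct_mulVec, Matrix.vecMul_transpose]
    simpa [dotProduct, hudef] using this
  have hcs : ∑ t, (A *ᵥ x) t * w t ≤
      Real.sqrt (∑ t, (A *ᵥ x) t ^ 2) * Real.sqrt (∑ t, w t ^ 2) := by
    have h1 := Finset.sum_mul_sq_le_sq_mul_sq Finset.univ (fun t => (A *ᵥ x) t) (fun t => w t)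
    calc ∑ t, (A *ᵥ x) t * w t ≤ |∑ t, (A *ᵥ x) t * w t| := le_abs_self _
      _ = Real.sqrt ((∑ t, (A *ᵥ x) t * w t) ^ 2) := (Real.sqrt_sq_eq_abs _).symm
      _ ≤ Real.sqrt ((∑ t, (A *ᵥ x) t ^ 2) * ∑ t, w t ^ 2) := Real.sqrt_le_sqrt h1
      _ = Real.sqrt (∑ t, (A *ᵥ x) t ^ 2) * Real.sqrt (∑ t, w t ^ 2) :=
          Real.sqrt_mul (Finset.sum_nonneg (fun _ _ => sq_nonneg _)) _
  have hsw : Real.sqrt (∑ t, w t ^ 2) ≤ ε := le_trans (Real.sqrt_le_sqrt hwv) hv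
  have hsA : Real.sqrt (∑ t, (A *ᵥ x) t ^ 2) ≤ Real.sqrt (2 * (1 + δ)) :=
    Real.sqrt_le_sqrt hAx
  have hfinal : |u i| + |u j| ≤ Real.sqrt (2 * (1 + δ)) * ε := by
    rw [← hxu, hdot]
    calc ∑ t, (A *ᵥ x) t * w t
        ≤ Real.sqrt (∑ t, (A *ᵥ x) t ^ 2) * Real.sqrt (∑ t, w t ^ 2) := hcs
      _ ≤ Real.sqrt (2 * (1 + δ)) * ε := by
          apply mul_le_mul hsA hsw (Real.sqrt_nonneg _) (Real.sqrt_nonneg _)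
  rw [hie, hje]
  exact hfinal
end

section
/- Let A ∈ ℝ^{m×n}, let K ≥ 1 be an integer, and suppose δ ∈ [0,1) satisfies the RIP of order K+1 for A. Let x ∈ ℝⁿ be K-sparse with nonempty support Ω = supp(x), let v ∈ ℝ^m satisfy ‖v‖₂ ≤ ε, and let S ⊊ Ω with |S| < |Ω|. Then ‖P_S^⊥(Ax + v)‖₂ ≥ √(1−δ) · min_{i∈Ω}|x_i| − ε. Consequently, if min_{i∈Ω}|x_i| > 2ε/√(1−δ), then ‖P_S^⊥(Ax + v)‖₂ > ε. -/
open Matrix Finset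

namespace OMPaux

lemma sum_sq_eq_dot {ι : Type*} [Fintype ι] (u : ι → ℝ) :
    ∑ i, u i ^ 2 = u ⬝ᵥ u := by
  simp [dotProduct, sq]

lemma l2norm_eq_norm {ι : Type*} [Fintype ι] (v : ι → ℝ) :
    l2norm v = ‖(WithLp.equiv 2 (ι → ℝ)).symm v‖ := by
  rw [EuclideanSpace.norm_eq]
  simp [l2norm, sq_abs]

lemma l2norm_nonneg {ι : Type*} [Fintype ι] (v : ι → ℝ) : 0 ≤ l2norm v :=
  Real.sqrt_nonneg _

lemma l2norm_sub_le {ι : Type*} [Fintype ι] (a b : ι → ℝ) :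
    l2norm a - l2norm b ≤ l2norm (a + b) := by
  rw [l2norm_eq_norm, l2norm_eq_norm, l2norm_eq_norm]
  have h : (WithLp.equiv 2 (ι → ℝ)).symm (a + b)
      = (WithLp.equiv 2 (ι → ℝ)).symm a + (WithLp.equiv 2 (ι → ℝ)).symm b := rfl
  rw [h]
  set A := (WithLp.equiv 2 (ι → ℝ)).symm a
  set B := (WithLp.equiv 2 (ι → ℝ)).symm b
  have h1 : ‖A‖ = ‖A + B + -B‖ := by rw [add_neg_cancel_right]
  have h2 := norm_add_le (A + B) (-B)
  rw [norm_neg] at h2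
  linarith

lemma dot_self_mulVec {m : ℕ} (M : Matrix (Fin m) (Fin m) ℝ)
    (hsym : Mᵀ = M) (hid : M * M = M) (w : Fin m → ℝ) :
    (M *ᵥ w) ⬝ᵥ (M *ᵥ w) = w ⬝ᵥ (M *ᵥ w) := by
  rw [Matrix.dotProduct_mulVec, ← Matrix.mulVec_transpose, Matrix.mulVec_mulVec, hsym, hid,
    dotProduct_comm]

lemma contract {m : ℕ} (P : Matrix (Fin m) (Fin m) ℝ)
    (hsym : Pᵀ = P) (hid : P * P = P) (w : Fin m → ℝ) :
    ∑ i, ((1 - P) *ᵥ w) i ^ 2 ≤ ∑ i, w i ^ 2 := by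
  have hsym' : (1 - P)ᵀ = 1 - P := by rw [Matrix.transpose_sub, Matrix.transpose_one, hsym]
  have hid' : (1 - P) * (1 - P) = 1 - P := by
    simp [Matrix.sub_mul, Matrix.mul_sub, hid]
  rw [sum_sq_eq_dot, sum_sq_eq_dot, dot_self_mulVec _ hsym' hid']
  have hP : 0 ≤ w ⬝ᵥ (P *ᵥ w) := by
    rw [← dot_self_mulVec P hsym hid w, ← sum_sq_eq_dot]
    positivity
  rw [Matrix.sub_mulVec, Matrix.one_mulVec, dotProduct_sub]
  linarith

def extend {n : ℕ} (S : Finset (Fin n)) (c : {j // j ∈ S} → ℝ) : Fin n → ℝ :=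
  fun i => if h : i ∈ S then c ⟨i, h⟩ else 0

lemma colSub_mulVec {m n : ℕ} (A : Matrix (Fin m) (Fin n) ℝ) (S : Finset (Fin n))
    (c : {j // j ∈ S} → ℝ) :
    (colSub A S) *ᵥ c = A *ᵥ extend S c := by
  funext i
  simp only [Matrix.mulVec, dotProduct, colSub]
  have h2 : ∑ j ∈ S, A i j * extend S c j = ∑ j : Fin n, A i j * extend S c j :=
    Finset.sum_subset (Finset.subset_univ S) (by intro j _ hj; simp [extend, hj])
  rw [← h2, ← Finset.sum_attach S (fun j => A i j * extend S c j), Finset.univ_eq_attach]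
  apply Finset.sum_congr rfl
  intro j _
  simp [extend]

lemma supp_extend_subset {n : ℕ} (S : Finset (Fin n)) (c : {j // j ∈ S} → ℝ) :
    sparseSupport (extend S c) ⊆ S := by
  intro i hi
  simp only [sparseSupport, Finset.mem_filter] at hi
  by_contra h
  exact hi.2 (dif_neg h)

lemma extend_ne_zero {n : ℕ} (S : Finset (Fin n)) (c : {j // j ∈ S} → ℝ) (hc : c ≠ 0) :
    extend S c ≠ 0 := by
  intro h
  apply hc
  funext j
  have : extend S c j.1 = 0 := by rw [h]; rfl
  rwa [extend, dif_pos j.2, Subtype.coe_eta] at this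

lemma dot_gram {m : ℕ} {β : Type*} [Fintype β] (B : Matrix (Fin m) β ℝ) (c : β → ℝ) :
    c ⬝ᵥ (Bᵀ * B) *ᵥ c = (B *ᵥ c) ⬝ᵥ (B *ᵥ c) := by
  rw [← Matrix.mulVec_mulVec, Matrix.mulVec_transpose, dotProduct_comm,
    ← Matrix.dotProduct_mulVec]

end OMPaux

open OMPaux

/-- Residual lower bound: `‖P_S^⊥(Ax+v)‖₂ ≥ √(1−δ)·min_{i∈Ω}|x_i| − ε`;
hence if `min_{i∈Ω}|x_i| > 2ε/√(1−δ)` then `‖P_S^⊥(Ax+v)‖₂ > ε`. -/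
theorem omp_residual_lower_bound {m n : ℕ} (A : Matrix (Fin m) (Fin n) ℝ)
    (K : ℕ) (hK : 1 ≤ K)
    (δ : ℝ) (hδ0 : 0 ≤ δ) (hδ1 : δ < 1) (hRIP : RIP A (K + 1) δ)
    (x : Fin n → ℝ) (hx : (sparseSupport x).card ≤ K)
    (hne : (sparseSupport x).Nonempty)
    (v : Fin m → ℝ) (ε : ℝ) (hv : l2norm v ≤ ε)
    (S : Finset (Fin n)) (hS : S ⊆ sparseSupport x)
    (hcard : S.card < (sparseSupport x).card) :
    l2norm ((projPerp A S).mulVec (A.mulVec x + v))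
      ≥ Real.sqrt (1 - δ) * (sparseSupport x).inf' hne (fun i => |x i|) - ε ∧
    ((sparseSupport x).inf' hne (fun i => |x i|) > 2 * ε / Real.sqrt (1 - δ) →
      ε < l2norm ((projPerp A S).mulVec (A.mulVec x + v))) := by
  set Ω := sparseSupport x with hΩ
  set μ := Ω.inf' hne (fun i => |x i|) with hμ
  set B := colSub A S with hB
  set G := Bᵀ * B with hGdef
  have hδ1' : (0:ℝ) < 1 - δ := by linarith
  have hμ0 : 0 ≤ μ := Finset.le_inf' hne _ (fun i _ => abs_nonneg _)
  have hε0 : 0 ≤ ε := le_trans (l2norm_nonneg v) hv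
  -- card facts
  have hSK : S.card ≤ K + 1 := le_trans (le_of_lt (lt_of_lt_of_le hcard hx)) (Nat.le_succ K)
  -- Gram matrix is positive definite
  have hGpd : G.PosDef := by
    rw [Matrix.posDef_iff_dotProduct_mulVec]
    constructor
    · exact Matrix.isHermitian_conjTranspose_mul_self B
    · intro c hc
      have hstar : (star c : {j // j ∈ S} → ℝ) = c := by
        funext j; simp
      rw [hstar, hGdef, dot_gram, colSub_mulVec, ← sum_sq_eq_dot]
      have hsupp : (sparseSupport (extend S c)).card ≤ K + 1 :=
        le_trans (Finset.card_le_card (supp_extend_subset S c)) hSK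
      have hlow := (hRIP (extend S c) hsupp).1
      have hnz : extend S c ≠ 0 := extend_ne_zero S c hc
      have hpos : 0 < ∑ i, (extend S c) i ^ 2 := by
        obtain ⟨i, hi⟩ : ∃ i, extend S c i ≠ 0 := by
          by_contra h
          push_neg at h
          exact hnz (funext h)
        have h1 : (extend S c i) ^ 2 ≤ ∑ j, (extend S c) j ^ 2 :=
          Finset.single_le_sum (f := fun j => (extend S c) j ^ 2)
            (fun j _ => sq_nonneg _) (Finset.mem_univ i)
        have h2 : 0 < (extend S c i) ^ 2 := pow_pos (abs_pos.mpr hi) 2 |>.trans_le (by rw [sq_abs])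
        linarith
      calc (0:ℝ) < (1 - δ) * ∑ i, (extend S c) i ^ 2 := by positivity
        _ ≤ ∑ i, (A *ᵥ extend S c) i ^ 2 := hlow
  have hG : IsUnit G.det := hGpd.det_pos.ne'.isUnit
  have hGsym : Gᵀ = G := by rw [hGdef, Matrix.transpose_mul, Matrix.transpose_transpose]
  set P := B * G⁻¹ * Bᵀ with hP
  have hPsym : Pᵀ = P := by
    rw [hP, Matrix.transpose_mul, Matrix.transpose_mul, Matrix.transpose_transpose,
      Matrix.transpose_nonsing_inv, hGsym, Matrix.mul_assoc]
  have hPidem : P * P = P := by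
    rw [hP]
    have h1 : Bᵀ * (B * G⁻¹ * Bᵀ) = G * G⁻¹ * Bᵀ := by
      rw [hGdef]; simp only [Matrix.mul_assoc]
    calc B * G⁻¹ * Bᵀ * (B * G⁻¹ * Bᵀ) = B * G⁻¹ * (Bᵀ * (B * G⁻¹ * Bᵀ)) := by
          rw [Matrix.mul_assoc]
      _ = B * G⁻¹ * (G * G⁻¹ * Bᵀ) := by rw [h1]
      _ = B * G⁻¹ * Bᵀ := by rw [Matrix.mul_nonsing_inv G hG, Matrix.one_mul]
  have hprojPerp : projPerp A S = 1 - P := rfl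
  -- residual identity
  set u := (G⁻¹ * Bᵀ) *ᵥ (A *ᵥ x) with hu
  set z := x - extend S u with hz
  have hresA : (1 - P) *ᵥ (A *ᵥ x) = A *ᵥ z := by
    rw [Matrix.sub_mulVec, Matrix.one_mulVec, hz, Matrix.mulVec_sub]
    congr 1
    rw [hP, Matrix.mul_assoc, ← Matrix.mulVec_mulVec, hu, colSub_mulVec]
  -- support of z
  have hsuppz : sparseSupport z ⊆ Ω := by
    intro i hi
    simp only [sparseSupport, Finset.mem_filter, Finset.mem_univ, true_and] at hi
    by_contra hiΩ
    have hxi : x i = 0 := by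
      by_contra hxi
      exact hiΩ (by simp [hΩ, sparseSupport, hxi])
    have hiS : i ∉ S := fun h => hiΩ (hS h)
    apply hi
    show x i - extend S u i = 0
    simp [extend, hiS, hxi]
  have hcardz : (sparseSupport z).card ≤ K + 1 :=
    le_trans (Finset.card_le_card hsuppz) (le_trans hx (Nat.le_succ K))
  have hlowz := (hRIP z hcardz).1
  obtain ⟨i₀, hi₀Ω, hi₀S⟩ : ∃ i ∈ Ω, i ∉ S := by
    by_contra h
    push_neg at h
    exact absurd (Finset.card_le_card (fun i hi => h i hi)) (not_le.mpr hcard)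
  have hzi₀ : z i₀ = x i₀ := by
    show x i₀ - extend S u i₀ = x i₀
    simp [extend, hi₀S]
  have hxi₀ : μ ≤ |x i₀| := Finset.inf'_le _ hi₀Ω
  have hsumz : μ ^ 2 ≤ ∑ i, z i ^ 2 := by
    have h1 : z i₀ ^ 2 ≤ ∑ i, z i ^ 2 :=
      Finset.single_le_sum (f := fun i => z i ^ 2) (fun j _ => sq_nonneg _) (Finset.mem_univ i₀)
    have h2 : μ ^ 2 ≤ |x i₀| ^ 2 := pow_le_pow_left₀ hμ0 hxi₀ 2
    rw [hzi₀] at h1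
    rw [sq_abs] at h2
    linarith
  have ha : Real.sqrt (1 - δ) * μ ≤ l2norm ((1 - P) *ᵥ (A *ᵥ x)) := by
    rw [hresA]
    have h1 : (1 - δ) * μ ^ 2 ≤ ∑ i, (A *ᵥ z) i ^ 2 :=
      le_trans (by nlinarith) hlowz
    calc Real.sqrt (1 - δ) * μ = Real.sqrt ((1 - δ) * μ ^ 2) := by
          rw [Real.sqrt_mul (le_of_lt hδ1'), Real.sqrt_sq hμ0]
      _ ≤ Real.sqrt (∑ i, (A *ᵥ z) i ^ 2) := Real.sqrt_le_sqrt h1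
      _ = l2norm (A *ᵥ z) := rfl
  have hb : l2norm ((1 - P) *ᵥ v) ≤ ε := by
    refine le_trans ?_ hv
    exact Real.sqrt_le_sqrt (contract P hPsym hPidem v)
  have hsplit : (projPerp A S) *ᵥ (A *ᵥ x + v) = (1 - P) *ᵥ (A *ᵥ x) + (1 - P) *ᵥ v := by
    rw [hprojPerp, Matrix.mulVec_add]
  have hmain : Real.sqrt (1 - δ) * μ - ε ≤ l2norm ((projPerp A S) *ᵥ (A *ᵥ x + v)) := by
    rw [hsplit]
    have h3 := l2norm_sub_le ((1 - P) *ᵥ (A *ᵥ x)) ((1 - P) *ᵥ v)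
    linarith
  refine ⟨hmain, fun hμbig => ?_⟩
  have hs : 0 < Real.sqrt (1 - δ) := Real.sqrt_pos.mpr hδ1'
  have h4 : 2 * ε < μ * Real.sqrt (1 - δ) := (div_lt_iff₀ hs).mp hμbig
  nlinarith [hmain]
end

section
/- Let A ∈ ℝ^{m×n} and let S₁, S₂ ⊆ {1,…,n} with |S₂∖S₁| ≥ 1. Suppose δ ∈ [0,1) satisfies the RIP of order |S₁∪S₂| for A. Then for every vector u ∈ ℝ^{|S₂∖S₁|}, (1−δ)‖u‖₂² ≤ ‖P_{S₁}^⊥ A_{S₂∖S₁} u‖₂² ≤ (1+δ)‖u‖₂². -/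
open Matrix Finset

/- ### Auxiliary lemmas -/

/-- Extension of a vector indexed by a subset to a full vector. -/
noncomputable def extT {n : ℕ} (T : Finset (Fin n)) (x : {j // j ∈ T} → ℝ) : Fin n → ℝ :=
  fun i => if h : i ∈ T then x ⟨i, h⟩ else 0

lemma extT_apply {n : ℕ} (T : Finset (Fin n)) (x : {j // j ∈ T} → ℝ) (j : {j // j ∈ T}) :
    extT T x j.1 = x j := by
  simp [extT, j.2]

lemma sum_extT {n : ℕ} (T : Finset (Fin n)) (x : {j // j ∈ T} → ℝ) (f : ℝ → ℝ) (hf : f 0 = 0) :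
    ∑ i, f (extT T x i) = ∑ j, f (x j) := by
  have h : ∀ j : {j // j ∈ T}, f (x j) = f (extT T x j.1) := fun j => by rw [extT_apply]
  rw [Finset.sum_congr rfl (fun j _ => h j), Finset.univ_eq_attach,
    Finset.sum_attach T (fun i => f (extT T x i))]
  exact (Finset.sum_subset (Finset.subset_univ T)
    (by intro i _ hi; simp [extT, hi, hf])).symm

lemma mulVec_extT {m n : ℕ} (A : Matrix (Fin m) (Fin n) ℝ) (T : Finset (Fin n))
    (x : {j // j ∈ T} → ℝ) : A.mulVec (extT T x) = (colSub A T).mulVec x := by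
  funext i
  have h : ∀ j : {j // j ∈ T}, colSub A T i j * x j = A i j.1 * extT T x j.1 :=
    fun j => by rw [extT_apply]; rfl
  simp only [Matrix.mulVec, dotProduct]
  rw [Finset.sum_congr rfl (fun j _ => h j), Finset.univ_eq_attach,
    Finset.sum_attach T (fun j => A i j * extT T x j)]
  exact (Finset.sum_subset (Finset.subset_univ T)
    (by intro j _ hj; simp [extT, hj])).symm

lemma support_extT {n : ℕ} (T : Finset (Fin n)) (x : {j // j ∈ T} → ℝ) :
    sparseSupport (extT T x) ⊆ T := by
  intro i hi
  simp only [sparseSupport, Finset.mem_filter] at hi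
  by_contra h
  exact hi.2 (dif_neg h)

lemma dot_trans {ι κ : Type*} [Fintype ι] [Fintype κ] (B : Matrix ι κ ℝ) (c : κ → ℝ)
    (w : ι → ℝ) : (B *ᵥ c) ⬝ᵥ w = c ⬝ᵥ (Bᵀ *ᵥ w) := by
  rw [Matrix.dotProduct_mulVec, Matrix.vecMul_transpose]

lemma sum_sq_eq_dot {ι : Type*} [Fintype ι] (w : ι → ℝ) : ∑ i, w i ^ 2 = w ⬝ᵥ w := by
  simp [dotProduct, sq]

/-- Main auxiliary lemma: the projected RIP bounds, for an arbitrary set `T` disjoint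
from `S₁`. -/
lemma projPerp_RIP_aux {m n : ℕ} (A : Matrix (Fin m) (Fin n) ℝ)
    (S₁ T : Finset (Fin n)) (hdis : ∀ i ∈ T, i ∉ S₁)
    (δ : ℝ) (hδ1 : δ < 1) (k : ℕ) (hRIP : RIP A k δ)
    (hS1k : S₁.card ≤ k) (hTk : T.card ≤ k) (hUk : (T ∪ S₁).card ≤ k)
    (u : {j // j ∈ T} → ℝ) :
    (1 - δ) * (∑ j, u j ^ 2)
        ≤ (∑ i, ((projPerp A S₁).mulVec ((colSub A T).mulVec u)) i ^ 2) ∧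
    (∑ i, ((projPerp A S₁).mulVec ((colSub A T).mulVec u)) i ^ 2)
        ≤ (1 + δ) * (∑ j, u j ^ 2) := by
  classical
  set B : Matrix (Fin m) {j // j ∈ S₁} ℝ := colSub A S₁ with hB
  set G : Matrix {j // j ∈ S₁} {j // j ∈ S₁} ℝ := Bᵀ * B with hG
  set v : Fin m → ℝ := (colSub A T).mulVec u with hv
  have h1δ : (0:ℝ) < 1 - δ := by linarith
  have hsq0 : (0:ℝ) ^ 2 = 0 := by norm_num
  -- G is positive definite, hence invertible
  have hGpd : G.PosDef := by
    refine Matrix.PosDef.of_dotProduct_mulVec_pos (by have h := Matrix.isHermitian_conjTranspose_mul_self B; rwa [Matrix.conjTranspose_eq_transpose_of_trivial] at h) (fun x hx => ?_)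
    have hx2 : (0:ℝ) < ∑ j, x j ^ 2 := by
      obtain ⟨j, hj⟩ := Function.ne_iff.mp hx
      exact Finset.sum_pos' (fun i _ => sq_nonneg _) ⟨j, Finset.mem_univ j, by simpa [sq_abs] using pow_pos (abs_pos.mpr hj) 2⟩
    have hrip := (hRIP (extT S₁ x) ((Finset.card_le_card (support_extT S₁ x)).trans hS1k)).1
    rw [mulVec_extT, sum_extT S₁ x (fun t => t ^ 2) hsq0] at hrip
    have key : x ⬝ᵥ G *ᵥ x = ∑ i, (B *ᵥ x) i ^ 2 := by
      rw [hG, ← Matrix.mulVec_mulVec x Bᵀ B, ← dot_trans, sum_sq_eq_dot]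
    simp only [RCLike.re_to_real, star_trivial]
    rw [key]
    calc (0:ℝ) < (1 - δ) * ∑ j, x j ^ 2 := mul_pos h1δ hx2
    _ ≤ _ := hrip
  have hGinv : G * G⁻¹ = 1 :=
    Matrix.mul_nonsing_inv G (isUnit_iff_ne_zero.mpr (ne_of_gt hGpd.det_pos))
  -- the projected vector
  set c : {j // j ∈ S₁} → ℝ := G⁻¹ *ᵥ (Bᵀ *ᵥ v) with hc
  set w : Fin m → ℝ := v - B *ᵥ c with hw
  have hproj : (projPerp A S₁).mulVec v = w := by
    rw [projPerp, Matrix.sub_mulVec, Matrix.one_mulVec, hw, ← hB,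
      ← Matrix.mulVec_mulVec v (B * G⁻¹) Bᵀ, ← Matrix.mulVec_mulVec (Bᵀ *ᵥ v) B G⁻¹,
      ← hc]
  have horth : Bᵀ *ᵥ w = 0 := by
    have h1 : Bᵀ *ᵥ (B *ᵥ c) = Bᵀ *ᵥ v := by
      rw [Matrix.mulVec_mulVec c Bᵀ B, ← hG, hc,
        Matrix.mulVec_mulVec (Bᵀ *ᵥ v) G G⁻¹, hGinv, Matrix.one_mulVec]
    rw [hw, Matrix.mulVec_sub, h1, sub_self]
  have hcross : (B *ᵥ c) ⬝ᵥ w = 0 := by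
    rw [dot_trans, horth, dotProduct_zero]
  -- Pythagoras
  have hpyth : ∑ i, v i ^ 2 = ∑ i, w i ^ 2 + ∑ i, (B *ᵥ c) i ^ 2 := by
    have expand : ∀ i, v i ^ 2 = w i ^ 2 + (B *ᵥ c) i ^ 2 + 2 * ((B *ᵥ c) i * w i) := by
      intro i
      have : v i = w i + (B *ᵥ c) i := by simp [hw]
      rw [this]; ring
    rw [Finset.sum_congr rfl (fun i _ => expand i), Finset.sum_add_distrib,
      Finset.sum_add_distrib, ← Finset.mul_sum]
    have hz : ∑ i, (B *ᵥ c) i * w i = 0 := hcross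
    rw [hz, mul_zero, add_zero]
  -- RIP applied to the extension of u
  have hripu := hRIP (extT T u) ((Finset.card_le_card (support_extT T u)).trans hTk)
  rw [mulVec_extT, sum_extT T u (fun t => t ^ 2) hsq0, ← hv] at hripu
  -- Upper bound
  have hupper : ∑ i, w i ^ 2 ≤ (1 + δ) * ∑ j, u j ^ 2 := by
    have h1 : ∑ i, w i ^ 2 ≤ ∑ i, v i ^ 2 := by
      rw [hpyth]
      have := Finset.sum_nonneg (fun i (_ : i ∈ Finset.univ) => sq_nonneg ((B *ᵥ c) i))
      linarith
    exact h1.trans hripu.2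
  -- Lower bound: build a sparse vector mapping to w
  set z : Fin n → ℝ := extT T u + extT S₁ (fun j => -(c j)) with hz
  have hAz : A.mulVec z = w := by
    rw [hz, Matrix.mulVec_add, mulVec_extT, mulVec_extT, ← hv, ← hB, hw]
    have hneg : B *ᵥ (fun j => -(c j)) = -(B *ᵥ c) := by
      have : (fun j => -(c j)) = -c := rfl
      rw [this, Matrix.mulVec_neg]
    rw [hneg]
    abel
  have hdisj0 : ∀ i, extT T u i * extT S₁ (fun j => -(c j)) i = 0 := by
    intro i
    by_cases h1 : i ∈ T
    · have h2 : i ∉ S₁ := hdis i h1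
      simp [extT, h2]
    · simp [extT, h1]
  have hzsupp : (sparseSupport z).card ≤ k := by
    refine (Finset.card_le_card (fun i hi => ?_)).trans hUk
    simp only [sparseSupport, Finset.mem_filter] at hi
    by_contra h
    have h1 : i ∉ T := fun ht => h (Finset.mem_union_left _ ht)
    have h2 : i ∉ S₁ := fun ht => h (Finset.mem_union_right _ ht)
    exact hi.2 (by simp [hz, extT, h1, h2])
  have hzsum : ∑ i, z i ^ 2 = ∑ j, u j ^ 2 + ∑ j, c j ^ 2 := by
    have expand : ∀ i, z i ^ 2
        = extT T u i ^ 2 + extT S₁ (fun j => -(c j)) i ^ 2 := by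
      intro i
      have h0 : z i = extT T u i + extT S₁ (fun j => -(c j)) i := rfl
      rw [h0]
      nlinarith [hdisj0 i]
    rw [Finset.sum_congr rfl (fun i _ => expand i), Finset.sum_add_distrib,
      sum_extT T u (fun t => t ^ 2) hsq0,
      sum_extT S₁ (fun j => -(c j)) (fun t => t ^ 2) hsq0]
    simp
  have hlower : (1 - δ) * ∑ j, u j ^ 2 ≤ ∑ i, w i ^ 2 := by
    have hrip := (hRIP z hzsupp).1
    rw [hAz, hzsum] at hrip
    have hc2 : (0:ℝ) ≤ ∑ j, c j ^ 2 := Finset.sum_nonneg (fun j _ => sq_nonneg _)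
    nlinarith
  rw [hproj]
  exact ⟨hlower, hupper⟩

/-- Lemma 4: if `|S₂ ∖ S₁| ≥ 1` and `δ` satisfies the RIP of order `|S₁ ∪ S₂|`,
then `(1−δ)‖u‖₂² ≤ ‖P_{S₁}^⊥ A_{S₂∖S₁} u‖₂² ≤ (1+δ)‖u‖₂²`. -/
theorem projPerp_RIP {m n : ℕ} (A : Matrix (Fin m) (Fin n) ℝ)
    (S₁ S₂ : Finset (Fin n)) (hcard : 1 ≤ (S₂ \ S₁).card)
    (δ : ℝ) (hδ0 : 0 ≤ δ) (hδ1 : δ < 1) (hRIP : RIP A ((S₁ ∪ S₂).card) δ)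
    (u : {j // j ∈ S₂ \ S₁} → ℝ) :
    (1 - δ) * (∑ j, u j ^ 2)
        ≤ (∑ i, ((projPerp A S₁).mulVec ((colSub A (S₂ \ S₁)).mulVec u)) i ^ 2) ∧
    (∑ i, ((projPerp A S₁).mulVec ((colSub A (S₂ \ S₁)).mulVec u)) i ^ 2)
        ≤ (1 + δ) * (∑ j, u j ^ 2) := by
  refine projPerp_RIP_aux A S₁ (S₂ \ S₁) (fun i hi => (Finset.mem_sdiff.mp hi).2)
    δ hδ1 _ hRIP (Finset.card_le_card Finset.subset_union_left)
    (Finset.card_le_card ((Finset.sdiff_subset).trans Finset.subset_union_right)) ?_ u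
  rw [Finset.sdiff_union_self_eq_union, Finset.union_comm]
end

section
/- Let K ≥ 1 be an integer, let δ be a real number with 0 < δ < 1/√(K+1), and let ε > 0. If additionally 1 − δ − √(1−δ)·√K·δ > 0, then (√(1+δ) + 1)·ε / (1 − δ − √(1−δ)·√K·δ) > 2ε / (1 − √(K+1)·δ). That is, the minimum-magnitude requirement min_{i∈Ω}|x_i| > 2ε/(1 − √(K+1)δ_{K+1}) is strictly weaker than the requirement min_{i∈Ω}|x_i| > (√(1+δ_{K+1})+1)ε/(1 − δ_{K+1} − √(1−δ_{K+1})√K δ_{K+1}). -/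
set_option maxHeartbeats 1000000


/-- For `K ≥ 1`, `0 < δ < 1/√(K+1)`, `ε > 0` and `1 − δ − √(1−δ)√K δ > 0`:
`(√(1+δ)+1)ε/(1 − δ − √(1−δ)√K δ) > 2ε/(1 − √(K+1)δ)`. -/
theorem min_magnitude_comparison (K : ℕ) (hK : 1 ≤ K) (δ ε : ℝ)
    (hδ0 : 0 < δ) (hδ : δ < 1 / Real.sqrt ((K : ℝ) + 1)) (hε : 0 < ε)
    (hpos : 0 < 1 - δ - Real.sqrt (1 - δ) * Real.sqrt (K : ℝ) * δ) :
    (Real.sqrt (1 + δ) + 1) * ε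
        / (1 - δ - Real.sqrt (1 - δ) * Real.sqrt (K : ℝ) * δ)
      > 2 * ε / (1 - Real.sqrt ((K : ℝ) + 1) * δ) := by
  set sK := Real.sqrt (K : ℝ) with hsK
  set sK1 := Real.sqrt ((K : ℝ) + 1) with hsK1
  set s1 := Real.sqrt (1 - δ) with hs1
  set sp := Real.sqrt (1 + δ) with hsp
  have hK1 : (1 : ℝ) ≤ (K : ℝ) := by exact_mod_cast hK
  have hsK1pos : 0 < sK1 := Real.sqrt_pos.mpr (by linarith)
  have hδ1 : sK1 * δ < 1 := by
    have h := (lt_div_iff₀ hsK1pos).mp hδ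
    nlinarith
  have hb : 0 < 1 - sK1 * δ := by linarith
  have hsK1sq : sK1 ^ 2 = (K : ℝ) + 1 := Real.sq_sqrt (by linarith)
  have hδlt : δ < 1 := by
    have h2 : Real.sqrt 2 ≤ sK1 := Real.sqrt_le_sqrt (by linarith)
    have h2' : (1:ℝ) < Real.sqrt 2 := by
      nlinarith [Real.sq_sqrt (by norm_num : (2:ℝ) ≥ 0), Real.sqrt_nonneg 2]
    nlinarith
  have hsKsq : sK ^ 2 = (K : ℝ) := Real.sq_sqrt (by linarith)
  have hs1sq : s1 ^ 2 = 1 - δ := Real.sq_sqrt (by linarith)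
  have hspsq : sp ^ 2 = 1 + δ := Real.sq_sqrt (by linarith)
  have hsKpos : 0 < sK := Real.sqrt_pos.mpr (by linarith)
  have hs1pos : 0 < s1 := Real.sqrt_pos.mpr (by linarith)
  have hsppos : 0 < sp := Real.sqrt_pos.mpr (by linarith)
  have hδ34 : δ < 3 / 4 := by
    have h2 : Real.sqrt 2 ≤ sK1 := Real.sqrt_le_sqrt (by linarith)
    have h2' : (4:ℝ)/3 < Real.sqrt 2 := by
      nlinarith [Real.sq_sqrt (by norm_num : (2:ℝ) ≥ 0), Real.sqrt_nonneg 2]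
    nlinarith
  have hδ2K : δ ^ 2 * (K : ℝ) < 1 := by
    have h : (sK1 * δ) ^ 2 < 1 := by nlinarith [mul_pos hsK1pos hδ0]
    nlinarith [sq_nonneg δ]
  have key0 : δ * (K : ℝ) < 2 * (s1 * sK) := by
    have he : (2 * (s1 * sK)) ^ 2 = 4 * (1 - δ) * (K : ℝ) := by
      have : (2 * (s1 * sK)) ^ 2 = 4 * s1 ^ 2 * sK ^ 2 := by ring
      rw [this, hs1sq, hsKsq]
    have hsq : (δ * (K : ℝ)) ^ 2 < (2 * (s1 * sK)) ^ 2 := by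
      rw [he]
      nlinarith [hδ2K, hK1, hδ34]
    have h1 : 0 ≤ δ * (K : ℝ) := by positivity
    have h2 : 0 ≤ 2 * (s1 * sK) := by positivity
    nlinarith
  have key : sK1 < 1 + s1 * sK := by
    have he : (1 + s1 * sK) ^ 2 = 1 + 2 * (s1 * sK) + (1 - δ) * (K : ℝ) := by
      have : (1 + s1 * sK) ^ 2 = 1 + 2 * (s1 * sK) + s1 ^ 2 * sK ^ 2 := by ring
      rw [this, hs1sq, hsKsq]
    have hsq : sK1 ^ 2 < (1 + s1 * sK) ^ 2 := by
      rw [he, hsK1sq]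
      nlinarith [key0, hδ0, hK1]
    nlinarith [mul_pos hs1pos hsKpos]
  have hab : 1 - δ - s1 * sK * δ < 1 - sK1 * δ := by nlinarith
  have hsp1 : 1 < sp := by nlinarith
  have step1 : 2 * ε / (1 - sK1 * δ) < 2 * ε / (1 - δ - s1 * sK * δ) :=
    div_lt_div_of_pos_left (by linarith) hpos hab
  have step2 : 2 * ε / (1 - δ - s1 * sK * δ)
      < (sp + 1) * ε / (1 - δ - s1 * sK * δ) := by
    rw [div_lt_div_iff₀ hpos hpos]
    nlinarith [mul_pos (mul_pos (sub_pos.mpr hsp1) hε) hpos]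
  linarith
end
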